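/- For every integer n ≥ 2, the vertex connectivity of the bubble-sort star graph satisfies κ(BS_n) = 2n − 3. -/

import Mathlib

/-- The generating set S₁ = {(1 j) : 2 ≤ j ≤ n} ∪ {(j j+1) : 2 ≤ j ≤ n−1},
where elements of {1,…,n} are encoded zero-indexed as `Fin n` (value k represents k+1). -/
def bsGen (n : ℕ) : Set (Equiv.Perm (Fin n)) :=
  {s | ∃ i j : Fin n, s = Equiv.swap i j ∧
      (((i : ℕ) = 0 ∧ j ≠ i) ∨
       ((j : ℕ) = (i : ℕ) + 1 ∧ 1 ≤ (i : ℕ)))}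

/-- The bubble-sort star graph BS_n = Cay(S_n, S₁). -/
def BS (n : ℕ) : SimpleGraph (Equiv.Perm (Fin n)) where
  Adj g h := g ≠ h ∧ g⁻¹ * h ∈ bsGen n
  symm := ⟨by
    rintro g h ⟨hne, i, j, hs, hc⟩
    refine ⟨hne.symm, i, j, ?_, hc⟩
    have hinv : h⁻¹ * g = (g⁻¹ * h)⁻¹ := by group
    rw [hinv, hs, Equiv.swap_inv]⟩
  loopless := ⟨fun g h => h.1 rfl⟩

/-- The vertex connectivity κ(G): the least size of a vertex set S such that G − S
is disconnected or has at most one vertex. -/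
noncomputable def kappa {V : Type*} (G : SimpleGraph V) : ℕ :=
  sInf {k | ∃ S : Set V, S.ncard = k ∧ (¬ (G.induce Sᶜ).Connected ∨ Sᶜ.ncard ≤ 1)}

namespace BSproof


variable {V : Type*} (G : SimpleGraph V)

/-- outer vertex boundary -/
def bd (A : Set V) : Set V := {v | v ∉ A ∧ ∃ a ∈ A, G.Adj a v}

/-- the "far side": vertices neither in A nor adjacent to A -/
def fcmp (A : Set V) : Set V := (A ∪ bd G A)ᶜ

variable {G}

lemma mem_bd {A : Set V} {v : V} : v ∈ bd G A ↔ v ∉ A ∧ ∃ a ∈ A, G.Adj a v := Iff.rfl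

lemma mem_fcmp {A : Set V} {v : V} : v ∈ fcmp G A ↔ v ∉ A ∧ ∀ a ∈ A, ¬ G.Adj a v := by
  simp only [fcmp, Set.mem_compl_iff, Set.mem_union, mem_bd, not_or, not_and, not_exists]
  tauto

lemma disj_bd {A : Set V} : Disjoint A (bd G A) :=
  Set.disjoint_left.2 fun _ ha hb => hb.1 ha

lemma disj_fcmp {A : Set V} : Disjoint A (fcmp G A) :=
  Set.disjoint_left.2 fun _ ha hb => (mem_fcmp.1 hb).1 ha

lemma disj_bd_fcmp {A : Set V} : Disjoint (bd G A) (fcmp G A) :=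
  Set.disjoint_left.2 fun v hb hc => ((Set.mem_compl_iff _ _).1 hc) (Set.mem_union_right _ hb)

lemma tricho {A : Set V} (v : V) : v ∈ A ∨ v ∈ bd G A ∨ v ∈ fcmp G A := by
  by_cases h1 : v ∈ A
  · exact Or.inl h1
  by_cases h2 : v ∈ bd G A
  · exact Or.inr (Or.inl h2)
  · exact Or.inr (Or.inr (by simp [fcmp, h1, h2]))

lemma bd_union_subset {A B : Set V} : bd G (A ∪ B) ⊆ bd G A ∪ bd G B := by
  rintro v ⟨hv, a, (ha | ha), hadj⟩
  · by_cases h : v ∈ A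
    · exact absurd (Or.inl h) hv
    · exact Or.inl ⟨h, a, ha, hadj⟩
  · by_cases h : v ∈ B
    · exact absurd (Or.inr h) hv
    · exact Or.inr ⟨h, a, ha, hadj⟩

lemma bd_inter_subset {A B : Set V} : bd G (A ∩ B) ⊆ bd G A ∪ bd G B := by
  rintro v ⟨hv, a, ⟨haA, haB⟩, hadj⟩
  by_cases h : v ∈ A
  · exact Or.inr ⟨fun hB => hv ⟨h, hB⟩, a, haB, hadj⟩
  · exact Or.inl ⟨h, a, haA, hadj⟩

lemma bd_inter_inter_subset {A B : Set V} :
    bd G (A ∩ B) ∩ bd G (A ∪ B) ⊆ bd G A ∩ bd G B := by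
  rintro v ⟨⟨_, a, ⟨haA, haB⟩, hadj⟩, hvu, _⟩
  have hvA : v ∉ A := fun h => hvu (Or.inl h)
  have hvB : v ∉ B := fun h => hvu (Or.inr h)
  exact ⟨⟨hvA, a, haA, hadj⟩, ⟨hvB, a, haB, hadj⟩⟩

lemma submod [Finite V] (A B : Set V) :
    (bd G (A ∩ B)).ncard + (bd G (A ∪ B)).ncard ≤ (bd G A).ncard + (bd G B).ncard := by
  rw [← Set.ncard_union_add_ncard_inter _ _ (Set.toFinite _) (Set.toFinite _),
    ← Set.ncard_union_add_ncard_inter (bd G A) (bd G B) (Set.toFinite _) (Set.toFinite _)]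
  have h1 : bd G (A ∩ B) ∪ bd G (A ∪ B) ⊆ bd G A ∪ bd G B :=
    Set.union_subset bd_inter_subset bd_union_subset
  exact Nat.add_le_add (Set.ncard_le_ncard h1 (Set.toFinite _))
    (Set.ncard_le_ncard bd_inter_inter_subset (Set.toFinite _))

lemma fcmp_union {A B : Set V} : fcmp G (A ∪ B) = fcmp G A ∩ fcmp G B := by
  ext v
  simp only [mem_fcmp, Set.mem_inter_iff, Set.mem_union]
  constructor
  · rintro ⟨h1, h2⟩
    exact ⟨⟨fun h => h1 (Or.inl h), fun a ha => h2 a (Or.inl ha)⟩,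
           ⟨fun h => h1 (Or.inr h), fun a ha => h2 a (Or.inr ha)⟩⟩
  · rintro ⟨⟨h1, h2⟩, h3, h4⟩
    exact ⟨fun h => h.elim h1 h3, fun a ha => ha.elim (h2 a) (h4 a)⟩

lemma fcmp_inter_supset {A B : Set V} : fcmp G A ∪ fcmp G B ⊆ fcmp G (A ∩ B) := by
  rintro v (hv | hv) <;> rw [mem_fcmp] at hv ⊢
  · exact ⟨fun h => hv.1 h.1, fun a ha => hv.2 a ha.1⟩
  · exact ⟨fun h => hv.1 h.2, fun a ha => hv.2 a ha.2⟩

/-- A is a fragment -/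
def IsFrag (G : SimpleGraph V) (A : Set V) : Prop := A.Nonempty ∧ (fcmp G A).Nonempty

lemma subset_fcmp_fcmp {A : Set V} : A ⊆ fcmp G (fcmp G A) := by
  intro v hv
  rw [mem_fcmp]
  refine ⟨fun h => (mem_fcmp.1 h).1 hv, fun a ha hadj => ?_⟩
  exact (mem_fcmp.1 ha).2 v hv hadj.symm

lemma frag_fcmp {A : Set V} (h : IsFrag G A) : IsFrag G (fcmp G A) :=
  ⟨h.2, h.1.mono subset_fcmp_fcmp⟩

lemma bd_fcmp_subset {A : Set V} : bd G (fcmp G A) ⊆ bd G A := by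
  rintro v ⟨hv, a, ha, hadj⟩
  have hvA : v ∉ A := fun h => (mem_fcmp.1 ha).2 v h hadj.symm
  rcases tricho (G := G) (A := A) v with h | h | h
  · exact absurd h hvA
  · exact h
  · exact absurd h hv


lemma bd_nonempty_of_walk {A : Set V} : ∀ {x c : V}, G.Walk x c → x ∈ A → c ∉ A → (bd G A).Nonempty := by
  intro x c w
  induction w with
  | nil => intro hx hc; exact absurd hx hc
  | @cons u v w h p ih =>
    intro hx hc
    by_cases hb : v ∈ A
    · exact ih hb hc
    · exact ⟨v, hb, u, hx, h⟩

lemma bd_nonempty (hpre : G.Preconnected) {A : Set V} (hA : IsFrag G A) :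
    (bd G A).Nonempty := by
  obtain ⟨x, hx⟩ := hA.1
  obtain ⟨c, hc⟩ := hA.2
  obtain ⟨w⟩ := hpre x c
  exact bd_nonempty_of_walk w hx (mem_fcmp.1 hc).1

lemma bd_fcmp_eq' [Finite V] {B : Set V} {κ : ℕ} (hBf : IsFrag G B) (hBb : (bd G B).ncard = κ)
    (hminb : ∀ C, IsFrag G C → κ ≤ (bd G C).ncard) : bd G (fcmp G B) = bd G B :=
  Set.eq_of_subset_of_ncard_le bd_fcmp_subset
    (le_trans (hBb ▸ le_refl _) (hminb _ (frag_fcmp hBf))) (Set.toFinite _)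

lemma fcmp_fcmp_eq' [Finite V] {B : Set V} {κ : ℕ} (hBf : IsFrag G B) (hBb : (bd G B).ncard = κ)
    (hminb : ∀ C, IsFrag G C → κ ≤ (bd G C).ncard) : fcmp G (fcmp G B) = B := by
  apply Set.Subset.antisymm _ subset_fcmp_fcmp
  intro v hv
  have h1 : v ∉ fcmp G B := fun h => (mem_fcmp.1 hv).1 h
  have h2 : v ∉ bd G B := by
    rw [← bd_fcmp_eq' hBf hBb hminb]
    exact fun h => (disj_bd_fcmp (G := G) (A := fcmp G B)).le_bot ⟨h, hv⟩
  rcases tricho (G := G) (A := B) v with h | h | h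
  · exact h
  · exact absurd h h2
  · exact absurd h h1

-- iso transport
lemma bd_image (e : G ≃g G) (A : Set V) : bd G (⇑e '' A) = ⇑e '' bd G A := by
  ext v
  constructor
  · rintro ⟨hv, a', ⟨a, ha, rfl⟩, hadj⟩
    refine ⟨e.symm v, ⟨?_, a, ha, ?_⟩, e.apply_symm_apply v⟩
    · intro h
      exact hv ⟨e.symm v, h, e.apply_symm_apply v⟩
    · have := e.symm.map_adj_iff.2 hadj
      simpa using this
  · rintro ⟨w, ⟨hw, a, ha, hadj⟩, rfl⟩
    refine ⟨?_, e a, ⟨a, ha, rfl⟩, e.map_adj_iff.2 hadj⟩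
    rintro ⟨u, hu, hequ⟩
    have : u = w := e.toEquiv.injective hequ
    exact hw (this ▸ hu)

lemma fcmp_image (e : G ≃g G) (A : Set V) : fcmp G (⇑e '' A) = ⇑e '' fcmp G A := by
  rw [fcmp, bd_image, ← Set.image_union, fcmp]
  exact (Set.image_compl_eq (f := ⇑e) e.toEquiv.bijective).symm

lemma frag_image (e : G ≃g G) {A : Set V} (hA : IsFrag G A) : IsFrag G (⇑e '' A) :=
  ⟨hA.1.image _, by rw [fcmp_image]; exact hA.2.image _⟩

lemma ncard_image (e : G ≃g G) (A : Set V) : (⇑e '' A).ncard = A.ncard :=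
  Set.ncard_image_of_injective _ e.toEquiv.injective


lemma no_inter {α : Type*} {S T : Set α} (h : ¬(S ∩ T).Nonempty) {v : α}
    (hs : v ∈ S) (ht : v ∈ T) : False := h ⟨v, hs, ht⟩

lemma atom_lemma [Finite V] {A B : Set V} {κ a : ℕ}
    (hAf : IsFrag G A) (hAb : (bd G A).ncard = κ) (hAa : A.ncard = a)
    (hminb : ∀ C, IsFrag G C → κ ≤ (bd G C).ncard)
    (hmina : ∀ C, IsFrag G C → (bd G C).ncard = κ → a ≤ C.ncard)
    (hBf : IsFrag G B) (hBb : (bd G B).ncard = κ)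
    (hAB : (A ∩ B).Nonempty) : A ⊆ B ∨ a ≤ κ := by
  have key : ∀ C : Set V, IsFrag G C → (bd G C).ncard = κ → (A ∩ C).Nonempty →
      (fcmp G A ∩ fcmp G C).Nonempty → A ⊆ C := by
    intro C hCf hCb hAC hcc
    have hUf : IsFrag G (A ∪ C) :=
      ⟨hAf.1.mono Set.subset_union_left, by rw [fcmp_union]; exact hcc⟩
    have hIf : IsFrag G (A ∩ C) :=
      ⟨hAC, hAf.2.mono (le_trans Set.subset_union_left fcmp_inter_supset)⟩
    have hsub := submod (G := G) A C
    have h1 : κ ≤ (bd G (A ∪ C)).ncard := hminb _ hUf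
    have h2 : κ ≤ (bd G (A ∩ C)).ncard := hminb _ hIf
    have h3 : (bd G (A ∩ C)).ncard = κ := by omega
    have h4 : a ≤ (A ∩ C).ncard := hmina _ hIf h3
    have h5 : A ∩ C = A := Set.eq_of_subset_of_ncard_le Set.inter_subset_left
      (by rw [hAa]; exact h4) (Set.toFinite _)
    rw [← h5]
    exact Set.inter_subset_right
  by_cases hcc : (fcmp G A ∩ fcmp G B).Nonempty
  · exact Or.inl (key B hBf hBb hAB hcc)
  · right
    have hcce : fcmp G A ∩ fcmp G B = ∅ := Set.not_nonempty_iff_eq_empty.1 hcc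
    have hBf' : IsFrag G (fcmp G B) := frag_fcmp hBf
    have hBb' : (bd G (fcmp G B)).ncard = κ := by rw [bd_fcmp_eq' hBf hBb hminb]; exact hBb
    by_cases h2 : (A ∩ fcmp G B).Nonempty
    · by_cases h3 : (fcmp G A ∩ B).Nonempty
      · exfalso
        have hAsub : A ⊆ fcmp G B := by
          apply key _ hBf' hBb' h2
          rw [fcmp_fcmp_eq' hBf hBb hminb]
          exact h3
        obtain ⟨x, hxA, hxB⟩ := hAB
        exact (mem_fcmp.1 (hAsub hxA)).1 hxB
      · -- fcmp A ⊆ bd B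
        have hsub : fcmp G A ⊆ bd G B := by
          intro v hv
          rcases tricho (G := G) (A := B) v with h | h | h
          · exact (no_inter h3 hv h).elim
          · exact h
          · exact (no_inter hcc hv h).elim
        have hAf' : IsFrag G (fcmp G A) := frag_fcmp hAf
        have hAb' : (bd G (fcmp G A)).ncard = κ := by rw [bd_fcmp_eq' hAf hAb hminb]; exact hAb
        calc a ≤ (fcmp G A).ncard := hmina _ hAf' hAb'
          _ ≤ (bd G B).ncard := Set.ncard_le_ncard hsub (Set.toFinite _)
          _ = κ := hBb
    · -- fcmp B ⊆ bd A
      have hsub : fcmp G B ⊆ bd G A := by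
        intro v hv
        rcases tricho (G := G) (A := A) v with h | h | h
        · exact (no_inter h2 h hv).elim
        · exact h
        · exact (no_inter hcc h hv).elim
      calc a ≤ (fcmp G B).ncard := hmina _ hBf' hBb'
        _ ≤ (bd G A).ncard := Set.ncard_le_ncard hsub (Set.toFinite _)
        _ = κ := hAb

theorem frag_bd_ge [Finite V] (hpre : G.Preconnected) {d : ℕ}
    (hreg : ∀ v : V, {w | G.Adj v w}.ncard = d)
    (htf : ∀ x y z : V, G.Adj x y → G.Adj y z → G.Adj x z → False)
    (htrans : ∀ v w : V, ∃ e : G ≃g G, e v = w)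
    {F : Set V} (hF : IsFrag G F) : d ≤ (bd G F).ncard := by
  by_contra hlt
  push_neg at hlt
  have hTne : Set.Nonempty {k | ∃ A, IsFrag G A ∧ (bd G A).ncard = k} := ⟨_, F, hF, rfl⟩
  set κ := sInf {k | ∃ A, IsFrag G A ∧ (bd G A).ncard = k} with hκdef
  obtain ⟨A1, hA1f, hA1b⟩ := Nat.sInf_mem hTne
  have hminb : ∀ C, IsFrag G C → κ ≤ (bd G C).ncard := fun C hC => Nat.sInf_le ⟨C, hC, rfl⟩
  have hκd : κ < d := lt_of_le_of_lt (hminb F hF) hlt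
  have hSzne : Set.Nonempty {m | ∃ A, IsFrag G A ∧ (bd G A).ncard = κ ∧ A.ncard = m} :=
    ⟨_, A1, hA1f, hA1b, rfl⟩
  set a := sInf {m | ∃ A, IsFrag G A ∧ (bd G A).ncard = κ ∧ A.ncard = m} with hadef
  obtain ⟨A, hAf, hAb, hAa⟩ := Nat.sInf_mem hSzne
  have hmina : ∀ C, IsFrag G C → (bd G C).ncard = κ → a ≤ C.ncard :=
    fun C h1 h2 => Nat.sInf_le ⟨C, h1, h2, rfl⟩
  -- there is an edge inside A
  have hedge : ∃ x ∈ A, ∃ y ∈ A, G.Adj x y := by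
    by_contra hne
    push_neg at hne
    obtain ⟨v, hv⟩ := hAf.1
    have hbdv : bd G {v} = {w | G.Adj v w} := by
      ext w
      constructor
      · rintro ⟨_, a', ha', hadj⟩
        rw [Set.mem_singleton_iff] at ha'
        exact ha' ▸ hadj
      · intro h
        exact ⟨fun hh => G.ne_of_adj h (Set.mem_singleton_iff.1 hh).symm, v, rfl, h⟩
    have hsub : bd G {v} ⊆ bd G A := by
      rw [hbdv]
      intro w hw
      have hwA : w ∉ A := fun h => hne v hv w h hw
      exact ⟨hwA, v, hv, hw⟩
    have : d ≤ (bd G A).ncard := by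
      rw [← hreg v, ← hbdv]
      exact Set.ncard_le_ncard hsub (Set.toFinite _)
    omega
  obtain ⟨x, hx, y, hy, hxy⟩ := hedge
  -- 2d ≤ a + κ
  have hNsub : ∀ z ∈ A, {w | G.Adj z w} ⊆ A ∪ bd G A := by
    intro z hz w hw
    rcases tricho (G := G) (A := A) w with h | h | h
    · exact Or.inl h
    · exact Or.inr h
    · exact absurd ((mem_fcmp.1 h).2 z hz hw) (by simp)
  have hNdisj : Disjoint {w | G.Adj x w} {w | G.Adj y w} :=
    Set.disjoint_left.2 fun w hwx hwy => htf x y w hxy hwy hwx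
  have hcount : 2 * d ≤ a + κ := by
    have h1 : ({w | G.Adj x w} ∪ {w | G.Adj y w}).ncard ≤ (A ∪ bd G A).ncard :=
      Set.ncard_le_ncard (Set.union_subset (hNsub x hx) (hNsub y hy)) (Set.toFinite _)
    rw [Set.ncard_union_eq hNdisj (Set.toFinite _) (Set.toFinite _),
      Set.ncard_union_eq (disj_bd (G := G) (A := A)) (Set.toFinite _) (Set.toFinite _),
      hreg x, hreg y, hAa, hAb] at h1
    omega
  -- a ≤ κ
  obtain ⟨t, ht⟩ := bd_nonempty hpre hAf
  obtain ⟨a0, ha0⟩ := hAf.1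
  obtain ⟨e, he⟩ := htrans a0 t
  set A2 := ⇑e '' A with hA2def
  have hA2f : IsFrag G A2 := frag_image e hAf
  have hA2b : (bd G A2).ncard = κ := by rw [hA2def, bd_image, ncard_image]; exact hAb
  have hA2a : A2.ncard = a := by rw [hA2def, ncard_image]; exact hAa
  have htA2 : t ∈ A2 := ⟨a0, ha0, he⟩
  have haκ : a ≤ κ := by
    by_cases hc1 : (A2 ∩ A).Nonempty
    · rcases atom_lemma hA2f hA2b hA2a hminb hmina hAf hAb hc1 with hsub | hle
      · exact absurd ht (fun hh => (disj_bd (G := G) (A := A)).le_bot ⟨hsub htA2, hh⟩)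
      · exact hle
    · by_cases hc2 : (A2 ∩ fcmp G A).Nonempty
      · have hAf' : IsFrag G (fcmp G A) := frag_fcmp hAf
        have hAb' : (bd G (fcmp G A)).ncard = κ := by rw [bd_fcmp_eq' hAf hAb hminb]; exact hAb
        rcases atom_lemma hA2f hA2b hA2a hminb hmina hAf' hAb' hc2 with hsub | hle
        · exact absurd ht (fun hh =>
            (disj_bd_fcmp (G := G) (A := A)).le_bot ⟨hh, hsub htA2⟩)
        · exact hle
      · have hsub : A2 ⊆ bd G A := by
          intro v hv
          rcases tricho (G := G) (A := A) v with h | h | h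
          · exact (no_inter hc1 hv h).elim
          · exact h
          · exact (no_inter hc2 hv h).elim
        rw [← hA2a, ← hAb]
        exact Set.ncard_le_ncard hsub (Set.toFinite _)
  omega



lemma gen_swap {n : ℕ} {s : Equiv.Perm (Fin n)} (hs : s ∈ bsGen n) :
    ∃ i j : Fin n, i ≠ j ∧ s = Equiv.swap i j := by
  obtain ⟨i, j, rfl, h | h⟩ := hs
  · exact ⟨i, j, fun he => h.2 he.symm, rfl⟩
  · refine ⟨i, j, fun he => ?_, rfl⟩
    have := congrArg Fin.val he
    omega

lemma gen_sign {n : ℕ} {s : Equiv.Perm (Fin n)} (hs : s ∈ bsGen n) :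
    Equiv.Perm.sign s = -1 := by
  obtain ⟨i, j, hij, rfl⟩ := gen_swap hs
  exact Equiv.Perm.sign_swap hij

lemma gen_ne_one {n : ℕ} {s : Equiv.Perm (Fin n)} (hs : s ∈ bsGen n) : s ≠ 1 := by
  intro h
  have := gen_sign hs
  rw [h, map_one] at this
  exact absurd this (by decide)

lemma BS_adj {n : ℕ} {g h : Equiv.Perm (Fin n)} :
    (BS n).Adj g h ↔ g ≠ h ∧ g⁻¹ * h ∈ bsGen n := Iff.rfl

lemma BS_adj_mul {n : ℕ} (g : Equiv.Perm (Fin n)) {s : Equiv.Perm (Fin n)}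
    (hs : s ∈ bsGen n) : (BS n).Adj g (g * s) := by
  refine ⟨fun h => gen_ne_one hs ?_, by simpa using hs⟩
  exact (mul_left_cancel (a := g) (show g * s = g * 1 by rw [mul_one, ← h]))

lemma BS_trianglefree {n : ℕ} (x y z : Equiv.Perm (Fin n))
    (h1 : (BS n).Adj x y) (h2 : (BS n).Adj y z) (h3 : (BS n).Adj x z) : False := by
  have hs := gen_sign h1.2
  have ht := gen_sign h2.2
  have hu := gen_sign h3.2
  have : x⁻¹ * z = (x⁻¹ * y) * (y⁻¹ * z) := by group
  rw [this, map_mul, hs, ht] at hu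
  exact absurd hu (by decide)

lemma BS_nbhd {n : ℕ} (v : Equiv.Perm (Fin n)) :
    {w | (BS n).Adj v w} = (fun s => v * s) '' bsGen n := by
  ext w
  constructor
  · rintro ⟨hne, hmem⟩
    exact ⟨v⁻¹ * w, hmem, by group⟩
  · rintro ⟨s, hs, rfl⟩
    exact BS_adj_mul v hs

def mulLeftIso (n : ℕ) (a : Equiv.Perm (Fin n)) : BS n ≃g BS n where
  toEquiv := Equiv.mulLeft a
  map_rel_iff' := by
    intro g h
    simp only [Equiv.coe_mulLeft, BS_adj]
    constructor
    · rintro ⟨hne, hmem⟩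
      refine ⟨fun he => hne (by rw [he]), ?_⟩
      have : (a * g)⁻¹ * (a * h) = g⁻¹ * h := by group
      rwa [this] at hmem
    · rintro ⟨hne, hmem⟩
      refine ⟨fun he => hne (mul_left_cancel he), ?_⟩
      have : (a * g)⁻¹ * (a * h) = g⁻¹ * h := by group
      rwa [this]

lemma BS_trans {n : ℕ} (v w : Equiv.Perm (Fin n)) : ∃ e : BS n ≃g BS n, e v = w :=
  ⟨mulLeftIso n (w * v⁻¹), by simp [mulLeftIso]⟩


lemma gen_star {n : ℕ} {z j : Fin n} (hz : (z : ℕ) = 0) (hj : j ≠ z) :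
    Equiv.swap z j ∈ bsGen n := ⟨z, j, rfl, Or.inl ⟨hz, hj⟩⟩

lemma reach_step {n : ℕ} {g : Equiv.Perm (Fin n)} (h : (BS n).Reachable 1 g)
    {s : Equiv.Perm (Fin n)} (hs : s ∈ bsGen n) : (BS n).Reachable 1 (g * s) :=
  h.trans (BS_adj_mul g hs).reachable

lemma reach_swap {n : ℕ} {z : Fin n} (hz : (z : ℕ) = 0) {g : Equiv.Perm (Fin n)}
    (h : (BS n).Reachable 1 g) {a b : Fin n} (hab : a ≠ b) :
    (BS n).Reachable 1 (g * Equiv.swap a b) := by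
  by_cases ha : a = z
  · rw [ha]
    exact reach_step h (gen_star hz (fun hh => hab (by rw [ha, hh])))
  · by_cases hb : b = z
    · subst hb
      rw [Equiv.swap_comm]
      exact reach_step h (gen_star hz ha)
    · have h1 := Equiv.swap_apply_apply (Equiv.swap z a) a b
      rw [Equiv.swap_apply_right, Equiv.swap_apply_of_ne_of_ne hb (fun hh => hab hh.symm),
        Equiv.swap_inv] at h1
      have key : Equiv.swap a b = Equiv.swap z a * Equiv.swap z b * Equiv.swap z a := by
        rw [h1]
        simp [mul_assoc, Equiv.swap_mul_self, Equiv.swap_mul_self_mul]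
      rw [key, ← mul_assoc, ← mul_assoc]
      exact reach_step (reach_step (reach_step h (gen_star hz ha)) (gen_star hz hb))
        (gen_star hz ha)

lemma BS_reach_one {n : ℕ} (hn : 2 ≤ n) (g : Equiv.Perm (Fin n)) :
    (BS n).Reachable 1 g := by
  have hz : ((⟨0, by omega⟩ : Fin n) : ℕ) = 0 := rfl
  have key : ∀ f : Equiv.Perm (Fin n), (BS n).Reachable 1 f⁻¹ := by
    intro f
    refine Equiv.Perm.swap_induction_on f (by rw [inv_one]) ?_
    intro f x y hxy ih
    rw [mul_inv_rev, Equiv.swap_inv]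
    exact reach_swap hz ih hxy
  simpa using key g⁻¹

lemma BS_preconnected {n : ℕ} (hn : 2 ≤ n) : (BS n).Preconnected :=
  fun u v => (BS_reach_one hn u).symm.trans (BS_reach_one hn v)


lemma ncard_Ico_nat (a b : ℕ) : (Set.Ico a b).ncard = b - a := by
  rw [← Finset.coe_Ico, Set.ncard_coe_finset, Nat.card_Ico]

lemma bsGen_ncard {n : ℕ} (hn : 2 ≤ n) : (bsGen n).ncard = 2 * n - 3 := by
  have npos : 0 < n := by omega
  set z : Fin n := ⟨0, npos⟩ with hzdef
  set f2 : Fin n → Equiv.Perm (Fin n) :=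
    fun i => Equiv.swap i ⟨((i : ℕ) + 1) % n, Nat.mod_lt _ npos⟩ with hf2
  set S1 : Set (Equiv.Perm (Fin n)) := (fun j => Equiv.swap z j) '' {j | j ≠ z} with hS1
  set S2 : Set (Equiv.Perm (Fin n)) := f2 '' {i : Fin n | 1 ≤ (i : ℕ) ∧ (i : ℕ) + 1 < n} with hS2
  have hsplit : bsGen n = S1 ∪ S2 := by
    ext s
    constructor
    · rintro ⟨i, j, rfl, ⟨hi0, hji⟩ | ⟨hj, hi1⟩⟩
      · left
        have hiz : i = z := Fin.ext (by simpa using hi0)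
        exact ⟨j, fun hh => hji (hh.trans hiz.symm), by rw [hiz]⟩
      · right
        have hlt : (i : ℕ) + 1 < n := by have := j.isLt; omega
        refine ⟨i, ⟨hi1, hlt⟩, ?_⟩
        have : j = (⟨((i : ℕ) + 1) % n, Nat.mod_lt _ npos⟩ : Fin n) :=
          Fin.ext (by simp [Nat.mod_eq_of_lt hlt, hj])
        rw [hf2, this]
    · rintro (⟨j, hj, rfl⟩ | ⟨i, ⟨hi1, hlt⟩, rfl⟩)
      · exact ⟨z, j, rfl, Or.inl ⟨rfl, hj⟩⟩
      · exact ⟨i, _, rfl, Or.inr ⟨by simp [Nat.mod_eq_of_lt hlt], hi1⟩⟩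
  have hd : Disjoint S1 S2 := by
    rw [Set.disjoint_left]
    rintro s ⟨j, hj, rfl⟩ ⟨i, ⟨hi1, hlt⟩, heq⟩
    set j2 : Fin n := ⟨((i : ℕ) + 1) % n, Nat.mod_lt _ npos⟩ with hj2
    have hj2v : (j2 : ℕ) = (i : ℕ) + 1 := Nat.mod_eq_of_lt hlt
    have happ := congrArg (fun p : Equiv.Perm (Fin n) => p z) heq.symm
    simp only [Equiv.swap_apply_left, hf2] at happ
    have hzi : z ≠ i := fun hh => by
      have : (0 : ℕ) = (i : ℕ) := congrArg Fin.val hh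
      omega
    have hzj2 : z ≠ j2 := fun hh => by
      have : (0 : ℕ) = (j2 : ℕ) := congrArg Fin.val hh
      omega
    rw [Equiv.swap_apply_of_ne_of_ne hzi hzj2] at happ
    exact hj happ
  have h1 : S1.ncard = n - 1 := by
    rw [hS1, Set.ncard_image_of_injOn (fun x _ y _ hxy => by
      have := congrArg (fun p : Equiv.Perm (Fin n) => p z) hxy
      simpa using this)]
    have hval : Fin.val '' {j : Fin n | j ≠ z} = Set.Ico 1 n := by
      ext m
      constructor
      · rintro ⟨j, hj, rfl⟩
        refine ⟨?_, j.isLt⟩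
        rcases Nat.eq_zero_or_pos j.val with h | h
        · exact absurd (Fin.ext (show j.val = (0:ℕ) from h)) hj
        · exact h
      · rintro ⟨h1, h2⟩
        refine ⟨⟨m, h2⟩, fun hh => ?_, rfl⟩
        have : m = (0 : ℕ) := congrArg Fin.val hh
        omega
    rw [← Set.ncard_image_of_injective {j : Fin n | j ≠ z} Fin.val_injective, hval, ncard_Ico_nat]
  have h2 : S2.ncard = n - 2 := by
    rw [hS2, Set.ncard_image_of_injOn ?inj]
    case inj =>
      rintro x ⟨hx1, hx2⟩ y ⟨hy1, hy2⟩ hxy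
      set jx : Fin n := ⟨((x : ℕ) + 1) % n, Nat.mod_lt _ npos⟩ with hjx
      set jy : Fin n := ⟨((y : ℕ) + 1) % n, Nat.mod_lt _ npos⟩ with hjy
      have hjxv : (jx : ℕ) = (x : ℕ) + 1 := Nat.mod_eq_of_lt hx2
      have hjyv : (jy : ℕ) = (y : ℕ) + 1 := Nat.mod_eq_of_lt hy2
      have happ := congrArg (fun p : Equiv.Perm (Fin n) => p x) hxy
      simp only [hf2, Equiv.swap_apply_left] at happ
      by_cases hxy' : x = y
      · exact hxy'
      · exfalso
        by_cases hxjy : x = jy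
        · rw [hxjy, Equiv.swap_apply_right] at happ
          have e1 : (x : ℕ) = (jy : ℕ) := congrArg Fin.val hxjy
          have e2 : ((jy : ℕ) + 1) % n = (y : ℕ) := congrArg Fin.val happ
          rw [Nat.mod_eq_of_lt (by omega)] at e2
          omega
        · rw [Equiv.swap_apply_of_ne_of_ne hxy' hxjy] at happ
          have e2 : ((x : ℕ) + 1) % n = (x : ℕ) := congrArg Fin.val happ
          rw [Nat.mod_eq_of_lt hx2] at e2
          omega
    have hval : Fin.val '' {i : Fin n | 1 ≤ (i : ℕ) ∧ (i : ℕ) + 1 < n} = Set.Ico 1 (n - 1) := by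
      ext m
      constructor
      · rintro ⟨i, ⟨ha, hb⟩, rfl⟩
        exact ⟨ha, by omega⟩
      · rintro ⟨ha, hb⟩
        exact ⟨⟨m, by omega⟩, ⟨ha, show m + 1 < n by omega⟩, rfl⟩
    rw [← Set.ncard_image_of_injective _ Fin.val_injective, hval, ncard_Ico_nat]
    omega
  rw [hsplit, Set.ncard_union_eq hd (Set.toFinite _) (Set.toFinite _), h1, h2]
  omega

lemma BS_degree {n : ℕ} (hn : 2 ≤ n) (v : Equiv.Perm (Fin n)) :
    {w | (BS n).Adj v w}.ncard = 2 * n - 3 := by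
  rw [BS_nbhd, Set.ncard_image_of_injective _ (mul_right_injective v), bsGen_ncard hn]


lemma two_le_fact (n : ℕ) (hn : 2 ≤ n) : 2 * n - 2 ≤ n.factorial := by
  induction n with
  | zero => omega
  | succ m ih =>
    by_cases hm : 2 ≤ m
    · have h1 := ih hm
      have h2 : m ≤ m.factorial := Nat.self_le_factorial m
      rw [Nat.factorial_succ]
      calc 2 * (m + 1) - 2 = (2 * m - 2) + m - (m - 2) := by omega
        _ ≤ m.factorial + m.factorial := by omega
        _ ≤ (m + 1) * m.factorial := by
            have := m.factorial_pos
            nlinarith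
    · have : m = 1 := by omega
      subst this
      decide

end BSproof

/-- For n ≥ 2, κ(BS_n) = 2n − 3. -/
theorem stmt10 (n : ℕ) (hn : 2 ≤ n) : kappa (BS n) = 2 * n - 3 := by
  classical
  have hcardV : Nat.card (Equiv.Perm (Fin n)) = n.factorial := by
    rw [Nat.card_eq_fintype_card, Fintype.card_perm, Fintype.card_fin]
  have hfact : 2 * n - 2 ≤ n.factorial := BSproof.two_le_fact n hn
  have hone : (1 : Equiv.Perm (Fin n)) ∉ bsGen n := fun h => BSproof.gen_ne_one h rfl
  have hmem : (2 * n - 3) ∈ {k | ∃ S : Set (Equiv.Perm (Fin n)),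
      S.ncard = k ∧ (¬ ((BS n).induce Sᶜ).Connected ∨ Sᶜ.ncard ≤ 1)} := by
    refine ⟨bsGen n, BSproof.bsGen_ncard hn, ?_⟩
    by_cases h3 : 3 ≤ n
    · left
      intro hcon
      set z : Fin n := ⟨0, by omega⟩ with hz
      set o : Fin n := ⟨1, by omega⟩ with ho
      set t : Fin n := ⟨2, by omega⟩ with ht
      have hzo : z ≠ o := fun h => by
        have : (0 : ℕ) = 1 := congrArg Fin.val h; omega
      have hzt : z ≠ t := fun h => by
        have : (0 : ℕ) = 2 := congrArg Fin.val h; omega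
      have hot : o ≠ t := fun h => by
        have : (1 : ℕ) = 2 := congrArg Fin.val h; omega
      set c : Equiv.Perm (Fin n) := Equiv.swap z o * Equiv.swap z t with hc
      have hcS : c ∉ bsGen n := by
        intro h
        have hsg := BSproof.gen_sign h
        rw [hc, map_mul, Equiv.Perm.sign_swap hzo, Equiv.Perm.sign_swap hzt] at hsg
        exact absurd hsg (by decide)
      have hct : c t = o := by
        rw [hc]
        rw [Equiv.Perm.mul_apply, Equiv.swap_apply_right, Equiv.swap_apply_left]
      have hc1 : c ≠ 1 := by
        intro h
        rw [h] at hct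
        exact hot (by simpa using hct.symm)
      obtain ⟨w⟩ := hcon.preconnected ⟨1, hone⟩ ⟨c, hcS⟩
      obtain ⟨b, -, x, hx, hadj⟩ := BSproof.bd_nonempty_of_walk
        (G := (BS n).induce (bsGen n)ᶜ) (A := {(⟨1, hone⟩ : ↥(bsGen n)ᶜ)}) w rfl
        (by
          intro hmem
          rw [Set.mem_singleton_iff] at hmem
          exact hc1 (congrArg Subtype.val hmem))
      rw [Set.mem_singleton_iff] at hx
      subst hx
      have hgadj : (BS n).Adj 1 b.val := hadj
      exact b.prop (by simpa using hgadj.2)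
    · right
      have hn2 : n = 2 := by omega
      have hsum := Set.ncard_add_ncard_compl (bsGen n)
      rw [BSproof.bsGen_ncard hn, hcardV] at hsum
      have h2 : n.factorial = 2 := by rw [hn2]; rfl
      omega
  refine le_antisymm (Nat.sInf_le hmem) (le_csInf ⟨_, hmem⟩ ?_)
  rintro k ⟨S, rfl, hbr⟩
  have hsum := Set.ncard_add_ncard_compl S
  rw [hcardV] at hsum
  by_cases hS1 : Sᶜ.ncard ≤ 1
  · omega
  · rcases hbr with hdisc | h1
    · have hSne : (Sᶜ).Nonempty := Set.nonempty_of_ncard_ne_zero (by omega)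
      have hne : Nonempty ↥(Sᶜ) := hSne.to_subtype
      have hpre' : ¬ ((BS n).induce Sᶜ).Preconnected := fun hp => hdisc ⟨hp⟩
      rw [SimpleGraph.Preconnected] at hpre'
      push_neg at hpre'
      obtain ⟨u, v, huv⟩ := hpre'
      set A : Set (Equiv.Perm (Fin n)) :=
        Subtype.val '' {x : ↥(Sᶜ) | ((BS n).induce Sᶜ).Reachable u x} with hA
      have hvA : v.val ∉ A := by
        rintro ⟨x, hx, hxv⟩
        exact huv (Subtype.ext hxv ▸ hx)
      have hfrag : BSproof.IsFrag (BS n) A := by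
        refine ⟨⟨u.val, u, SimpleGraph.Reachable.refl u, rfl⟩, v.val, ?_⟩
        rw [BSproof.mem_fcmp]
        refine ⟨hvA, ?_⟩
        rintro a ⟨x, hx, rfl⟩ hadj
        have : ((BS n).induce Sᶜ).Adj x v := hadj
        exact huv (hx.trans this.reachable)
      have hbdS : BSproof.bd (BS n) A ⊆ S := by
        rintro w ⟨hwA, a, ⟨x, hx, rfl⟩, hadj⟩
        by_contra hwS
        have hwc : w ∈ Sᶜ := hwS
        have hadj' : ((BS n).induce Sᶜ).Adj x ⟨w, hwc⟩ := hadj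
        exact hwA ⟨⟨w, hwc⟩, hx.trans hadj'.reachable, rfl⟩
      have hge : 2 * n - 3 ≤ (BSproof.bd (BS n) A).ncard :=
        BSproof.frag_bd_ge (BSproof.BS_preconnected hn) (BSproof.BS_degree hn)
          BSproof.BS_trianglefree BSproof.BS_trans hfrag
      calc 2 * n - 3 ≤ (BSproof.bd (BS n) A).ncard := hge
        _ ≤ S.ncard := Set.ncard_le_ncard hbdS (Set.toFinite _)
    · omega
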